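/- The matrix exponential exp : 𝔰𝔬(n) → SO(n) is surjective: every special orthogonal matrix B ∈ SO(n) equals exp(A) for some real skew-symmetric matrix A. -/

import Mathlib

open NormedSpace Matrix

noncomputable section

namespace SOexp




variable {m l : Type*} [Fintype m] [DecidableEq m] [Fintype l] [DecidableEq l]

private lemma corner_pow (C : Matrix l m ℝ) (M : Matrix m m ℝ) (hC : Cᵀ * C = 1) (k : ℕ) :
    (C * M * Cᵀ) ^ (k + 1) = C * M ^ (k + 1) * Cᵀ := by
  induction k with
  | zero => simp
  | succ k ih =>
      rw [pow_succ, ih, pow_succ]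
      calc C * M ^ (k+1) * Cᵀ * (C * M * Cᵀ)
          = C * M ^ (k+1) * (Cᵀ * C) * M * Cᵀ := by
            simp only [Matrix.mul_assoc]
        _ = C * (M ^ (k+1) * M) * Cᵀ := by rw [hC]; simp only [Matrix.mul_assoc, Matrix.mul_one]

/-- Corner exponential: if `Cᵀ C = 1` then `exp (C M Cᵀ) = 1 + C (exp M - 1) Cᵀ`. -/
lemma corner_exp (C : Matrix l m ℝ) (M : Matrix m m ℝ) (hC : Cᵀ * C = 1) :
    exp (C * M * Cᵀ) = 1 + C * (exp M - 1) * Cᵀ := by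
  letI : SeminormedRing (Matrix m m ℝ) := Matrix.linftyOpSemiNormedRing
  letI : NormedRing (Matrix m m ℝ) := Matrix.linftyOpNormedRing
  letI : NormedAlgebra ℝ (Matrix m m ℝ) := Matrix.linftyOpNormedAlgebra
  letI : SeminormedRing (Matrix l l ℝ) := Matrix.linftyOpSemiNormedRing
  letI : NormedRing (Matrix l l ℝ) := Matrix.linftyOpNormedRing
  letI : NormedAlgebra ℝ (Matrix l l ℝ) := Matrix.linftyOpNormedAlgebra
  have hsum : Summable fun k : ℕ => ((k.factorial : ℝ))⁻¹ • M ^ k := expSeries_summable' (𝕂 := ℝ) M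
  have hsum' : Summable fun k : ℕ => (((k+1).factorial : ℝ))⁻¹ • M ^ (k+1) :=
    (hsum.comp_injective fun a b h => by simpa using h : Summable ((fun k : ℕ => ((k.factorial : ℝ))⁻¹ • M ^ k) ∘ (· + 1)))
  have hsumC : Summable fun k : ℕ => (((k+1).factorial : ℝ))⁻¹ • (C * M * Cᵀ) ^ (k+1) := by
    have := (expSeries_summable' (𝕂 := ℝ) (C * M * Cᵀ)).comp_injective
      (fun a b h => by simpa using h : Function.Injective (· + 1))
    exact this
  -- the linear map X ↦ C * X * Cᵀ
  let L : Matrix m m ℝ →ₗ[ℝ] Matrix l l ℝ :=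
    { toFun := fun X => C * X * Cᵀ
      map_add' := by intro X Y; simp [Matrix.mul_add, Matrix.add_mul]
      map_smul' := by intro c X; simp [Matrix.mul_smul, Matrix.smul_mul] }
  have hL : Continuous L := L.continuous_of_finiteDimensional
  have hEM : exp M - 1 = ∑' k : ℕ, (((k+1).factorial : ℝ))⁻¹ • M ^ (k+1) := by
    simp only [exp_eq_tsum ℝ]
    rw [hsum.tsum_eq_zero_add]
    simp
  have main : exp (C * M * Cᵀ)
      = 1 + ∑' k : ℕ, (((k+1).factorial : ℝ))⁻¹ • (C * M * Cᵀ) ^ (k+1) := by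
    simp only [exp_eq_tsum ℝ]
    rw [(show Summable fun k : ℕ => ((k.factorial : ℝ))⁻¹ • (C * M * Cᵀ) ^ k from expSeries_summable' (𝕂 := ℝ) (C * M * Cᵀ)).tsum_eq_zero_add]
    simp
  rw [main]
  congr 1
  have : ∀ k : ℕ, (((k+1).factorial : ℝ))⁻¹ • (C * M * Cᵀ) ^ (k+1)
      = L ((((k+1).factorial : ℝ))⁻¹ • M ^ (k+1)) := by
    intro k
    rw [corner_pow C M hC k]
    simp [L]
  calc (∑' k : ℕ, (((k+1).factorial : ℝ))⁻¹ • (C * M * Cᵀ) ^ (k+1))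
      = ∑' k : ℕ, L ((((k+1).factorial : ℝ))⁻¹ • M ^ (k+1)) := by exact tsum_congr this
    _ = L (∑' k : ℕ, (((k+1).factorial : ℝ))⁻¹ • M ^ (k+1)) := (hsum'.hasSum.map L hL).tsum_eq
    _ = L (exp M - 1) := by rw [hEM]
    _ = C * (exp M - 1) * Cᵀ := rfl

/-- Rotation exponential: if `X * X = -1` then `exp (t • X) = cos t • 1 + sin t • X`. -/
lemma rot_exp (X : Matrix m m ℝ) (hX : X * X = -1) (t : ℝ) :
    exp (t • X) = Real.cos t • 1 + Real.sin t • X := by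
  letI : SeminormedRing (Matrix m m ℝ) := Matrix.linftyOpSemiNormedRing
  letI : NormedRing (Matrix m m ℝ) := Matrix.linftyOpNormedRing
  letI : NormedAlgebra ℝ (Matrix m m ℝ) := Matrix.linftyOpNormedAlgebra
  let ψ : ℂ →ₐ[ℝ] Matrix m m ℝ := Complex.liftAux X hX
  have hψcont : Continuous ψ := ψ.toLinearMap.continuous_of_finiteDimensional
  have h1 : (t • X : Matrix m m ℝ) = ψ ((t : ℂ) * Complex.I) := by
    simp [ψ, Complex.liftAux_apply]
  rw [h1, show exp (ψ ((t : ℂ) * Complex.I)) = ψ (exp ((t : ℂ) * Complex.I)) from (map_exp ψ hψcont _).symm]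
  have h2 : exp ((t : ℂ) * Complex.I) = Complex.exp ((t : ℂ) * Complex.I) := by
    rw [Complex.exp_eq_exp_ℂ]
  rw [h2, Complex.exp_mul_I]
  have hre : (Complex.cos t + Complex.sin t * Complex.I).re = Real.cos t := by
    simp [Complex.cos_ofReal_re, Complex.sin_ofReal_re]
  have him : (Complex.cos t + Complex.sin t * Complex.I).im = Real.sin t := by
    simp [Complex.cos_ofReal_im, Complex.sin_ofReal_im, Complex.sin_ofReal_re]
  rw [Complex.liftAux_apply, hre, him, Algebra.algebraMap_eq_smul_one]




variable {m : Type*} [Fintype m] [DecidableEq m]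

lemma exp_sum_one_add {ι : Type*} [DecidableEq ι] (s : Finset ι) (Ab T : ι → Matrix m m ℝ)
    (hz : ∀ i ∈ s, ∀ j ∈ s, i ≠ j → Ab i * Ab j = 0)
    (hzT : ∀ i ∈ s, ∀ j ∈ s, i ≠ j → T i * T j = 0)
    (hexp : ∀ i ∈ s, exp (Ab i) = 1 + T i) :
    exp (∑ i ∈ s, Ab i) = 1 + ∑ i ∈ s, T i := by
  induction s using Finset.induction_on with
  | empty => simp
  | insert _ _ ha ih =>
      rename_i a s'
      rw [Finset.sum_insert ha, Finset.sum_insert ha]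
      have hcomm : Commute (Ab a) (∑ i ∈ s', Ab i) := by
        have h1 : Ab a * (∑ i ∈ s', Ab i) = 0 := by
          rw [Finset.mul_sum]
          refine Finset.sum_eq_zero fun i hi => ?_
          exact hz a (Finset.mem_insert_self a s') i (Finset.mem_insert_of_mem hi)
            (fun h => ha (h ▸ hi))
        have h2 : (∑ i ∈ s', Ab i) * Ab a = 0 := by
          rw [Finset.sum_mul]
          refine Finset.sum_eq_zero fun i hi => ?_
          exact hz i (Finset.mem_insert_of_mem hi) a (Finset.mem_insert_self a s')
            (fun h => ha (h ▸ hi))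
        rw [Commute, SemiconjBy, h1, h2]
      rw [Matrix.exp_add_of_commute _ _ hcomm]
      rw [ih (fun i hi j hj hij => hz i (Finset.mem_insert_of_mem hi) j (Finset.mem_insert_of_mem hj) hij)
            (fun i hi j hj hij => hzT i (Finset.mem_insert_of_mem hi) j (Finset.mem_insert_of_mem hj) hij)
            (fun i hi => hexp i (Finset.mem_insert_of_mem hi)),
          hexp a (Finset.mem_insert_self a s')]
      have hTa : T a * (∑ i ∈ s', T i) = 0 := by
        rw [Finset.mul_sum]
        refine Finset.sum_eq_zero fun i hi => ?_
        exact hzT a (Finset.mem_insert_self a s') i (Finset.mem_insert_of_mem hi)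
          (fun h => ha (h ▸ hi))
      rw [add_mul, one_mul, mul_add, mul_one, hTa]
      abel

variable {ι : Type*} [Fintype ι] [DecidableEq ι]

/-- the embedding matrix of an injection `f : ι → m`. -/
def Cemb (f : ι → m) : Matrix m ι ℝ := Matrix.of fun i a => if f a = i then (1:ℝ) else 0

lemma Cemb_tC (f : ι → m) (hf : Function.Injective f) : (Cemb f)ᵀ * Cemb f = (1 : Matrix ι ι ℝ) := by
  ext a b
  simp only [Matrix.mul_apply, Matrix.transpose_apply, Cemb, Matrix.of_apply, ite_mul, one_mul,
    zero_mul, Matrix.one_apply]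
  rw [Finset.sum_ite_eq Finset.univ (f a) (fun i => if f b = i then (1:ℝ) else 0)]
  simp [hf.eq_iff, eq_comm]

lemma Cemb_Ct (f : ι → m) (hf : Function.Injective f) [DecidablePred (· ∈ Set.range f)] :
    Cemb f * (Cemb f)ᵀ = Matrix.diagonal (fun i => if i ∈ Set.range f then (1:ℝ) else 0) := by
  ext i j
  simp only [Matrix.mul_apply, Matrix.transpose_apply, Cemb, Matrix.of_apply, ite_mul, one_mul,
    zero_mul, Matrix.diagonal_apply]
  by_cases hij : i = j
  · subst hij
    simp only [if_pos rfl]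
    have : ∀ a : ι, (if f a = i then (if f a = i then (1:ℝ) else 0) else 0)
        = if f a = i then (1:ℝ) else 0 := by
      intro a; split_ifs with h <;> simp [h]
    rw [Finset.sum_congr rfl (fun a _ => this a), Finset.sum_boole]
    by_cases h : i ∈ Set.range f
    · rw [if_pos h]
      obtain ⟨a0, ha0⟩ := h
      have hfil : (Finset.univ.filter (fun a => f a = i)) = {a0} := by
        ext a
        simp only [Finset.mem_filter, Finset.mem_univ, true_and, Finset.mem_singleton]
        constructor
        · intro h'
          exact hf (by rw [h', ha0])
        · rintro rfl
          exact ha0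
      rw [hfil, Finset.card_singleton, Nat.cast_one]
      simp
    · rw [if_neg h]
      have hfil : (Finset.univ.filter (fun a => f a = i)) = ∅ := by
        ext a
        simp only [Finset.mem_filter, Finset.mem_univ, true_and, Finset.notMem_empty, iff_false]
        exact fun h' => h ⟨a, h'⟩
      rw [hfil, Finset.card_empty, Nat.cast_zero]
      simp
  · rw [if_neg hij]
    refine Finset.sum_eq_zero fun a _ => ?_
    split_ifs with h1 h2
    · exact absurd (h1.symm.trans h2) hij
    · rfl
    · rfl


open scoped Classical

variable {n : ℕ}

/-- diagonal spectral projection onto indices where `d i = μ`. -/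
def Pm (d : Fin n → ℝ) (μ : ℝ) : Matrix (Fin n) (Fin n) ℝ :=
  Matrix.diagonal (fun i => if d i = μ then (1:ℝ) else 0)

lemma Pm_t (d : Fin n → ℝ) (μ : ℝ) : (Pm d μ)ᵀ = Pm d μ :=
  Matrix.diagonal_transpose _

lemma Pm_mul_self (d : Fin n → ℝ) (μ : ℝ) : Pm d μ * Pm d μ = Pm d μ := by
  simp only [Pm]
  rw [Matrix.diagonal_mul_diagonal]
  refine congrArg Matrix.diagonal (funext fun i => ?_)
  by_cases h : d i = μ <;> simp [h]

lemma Pm_mul_ne (d : Fin n → ℝ) {μ ν : ℝ} (hne : μ ≠ ν) : Pm d μ * Pm d ν = 0 := by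
  simp only [Pm]
  rw [Matrix.diagonal_mul_diagonal]
  have h : (fun i => (if d i = μ then (1:ℝ) else 0) * (if d i = ν then 1 else 0)) = fun _ => 0 := by
    funext i
    by_cases h1 : d i = μ
    · have h2 : d i ≠ ν := fun hh => hne (h1.symm.trans hh)
      simp [h1, h2, hne]
    · simp [h1]
  rw [h, Matrix.diagonal_zero]

lemma Pm_sum (d : Fin n → ℝ) :
    ∑ μ ∈ Finset.image d Finset.univ, Pm d μ = 1 := by
  ext i j
  rw [Matrix.sum_apply]
  by_cases hij : i = j
  · subst hij
    rw [Matrix.one_apply_eq]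
    calc ∑ μ ∈ Finset.image d Finset.univ, Pm d μ i i
        = ∑ μ ∈ Finset.image d Finset.univ, (if d i = μ then (1:ℝ) else 0) := by
          refine Finset.sum_congr rfl fun μ _ => ?_
          rw [Pm, Matrix.diagonal_apply_eq]
      _ = 1 := by
          rw [Finset.sum_ite_eq (Finset.image d Finset.univ) (d i) (fun _ => (1:ℝ))]
          simp [Finset.mem_image_of_mem d (Finset.mem_univ i)]
  · rw [Matrix.one_apply_ne hij]
    refine Finset.sum_eq_zero fun μ _ => ?_
    rw [Pm, Matrix.diagonal_apply_ne _ hij]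

lemma Pm_sum_smul (d : Fin n → ℝ) :
    ∑ μ ∈ Finset.image d Finset.univ, (μ - 1) • Pm d μ = Matrix.diagonal d - 1 := by
  ext i j
  rw [Matrix.sum_apply]
  by_cases hij : i = j
  · subst hij
    rw [Matrix.sub_apply, Matrix.diagonal_apply_eq, Matrix.one_apply_eq]
    calc ∑ μ ∈ Finset.image d Finset.univ, ((μ - 1) • Pm d μ) i i
        = ∑ μ ∈ Finset.image d Finset.univ, (if d i = μ then (μ - 1 : ℝ) else 0) := by
          refine Finset.sum_congr rfl fun μ _ => ?_
          rw [Matrix.smul_apply, Pm, Matrix.diagonal_apply_eq, smul_eq_mul]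
          by_cases h : d i = μ <;> simp [h]
      _ = d i - 1 := by
          rw [Finset.sum_ite_eq (Finset.image d Finset.univ) (d i) (fun μ => (μ - 1 : ℝ))]
          simp [Finset.mem_image_of_mem d (Finset.mem_univ i)]
  · rw [Matrix.sub_apply, Matrix.diagonal_apply_ne _ hij, Matrix.one_apply_ne hij]
    simp only [sub_zero]
    refine Finset.sum_eq_zero fun μ _ => ?_
    rw [Matrix.smul_apply, Pm, Matrix.diagonal_apply_ne _ hij, smul_zero]

lemma diag_mul_Pm (d : Fin n → ℝ) (μ : ℝ) :
    Matrix.diagonal d * Pm d μ = μ • Pm d μ := by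
  simp only [Pm]
  rw [Matrix.diagonal_mul_diagonal]
  ext i j
  rw [Matrix.smul_apply, Matrix.diagonal_apply, Matrix.diagonal_apply]
  by_cases hij : i = j
  · simp only [if_pos hij]
    by_cases h : d i = μ <;> simp [h]
  · simp [hij]

lemma Pm_not_mem (d : Fin n → ℝ) {μ : ℝ} (h : μ ∉ Finset.image d Finset.univ) :
    Pm d μ = 0 := by
  rw [Pm]
  have : (fun i => if d i = μ then (1:ℝ) else 0) = fun _ => 0 := by
    funext i
    have : d i ≠ μ := fun hh => h (hh ▸ Finset.mem_image_of_mem d (Finset.mem_univ i))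
    simp [this]
  rw [this, Matrix.diagonal_zero]

lemma one_sub_two_Pm (d : Fin n → ℝ) (μ : ℝ) :
    (1 : Matrix (Fin n) (Fin n) ℝ) - 2 • Pm d μ
      = Matrix.diagonal (fun i => if d i = μ then (-1:ℝ) else 1) := by
  ext i j
  by_cases hij : i = j
  · subst hij
    rw [Matrix.sub_apply, Matrix.one_apply_eq, Matrix.smul_apply, Pm,
      Matrix.diagonal_apply_eq, Matrix.diagonal_apply_eq]
    by_cases h : d i = μ <;> simp [h] <;> norm_num
  · rw [Matrix.sub_apply, Matrix.one_apply_ne hij, Matrix.smul_apply, Pm,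
      Matrix.diagonal_apply_ne _ hij, Matrix.diagonal_apply_ne _ hij, smul_zero, sub_zero]

lemma det_one_sub_two_Pm (d : Fin n → ℝ) (μ : ℝ) :
    ((1 : Matrix (Fin n) (Fin n) ℝ) - 2 • Pm d μ).det
      = (-1 : ℝ)^(Finset.univ.filter (fun i => d i = μ)).card := by
  rw [one_sub_two_Pm, Matrix.det_diagonal, Finset.prod_ite, Finset.prod_const,
    Finset.prod_const, one_pow, mul_one]

/-- the main per-eigenvalue block computation, for `μ² < 1`. -/
lemma block_exp (d : Fin n → ℝ) (K' : Matrix (Fin n) (Fin n) ℝ) (μ : ℝ)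
    (hμ : μ^2 < 1)
    (hPK : Pm d μ * K' = K' * Pm d μ)
    (hKPK : Pm d μ * (K' * K') = (μ^2 - 1) • Pm d μ) :
    exp ((Real.arccos μ * (Real.sqrt (1 - μ^2))⁻¹) • (Pm d μ * K'))
      = 1 + ((μ - 1) • Pm d μ + Pm d μ * K') := by
  have hs2 : Real.sqrt (1 - μ^2) ^ 2 = 1 - μ^2 := Real.sq_sqrt (by nlinarith)
  have hspos : 0 < Real.sqrt (1 - μ^2) := Real.sqrt_pos.mpr (by nlinarith)
  have hsne : Real.sqrt (1 - μ^2) ≠ 0 := ne_of_gt hspos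
  set s : ℝ := Real.sqrt (1 - μ^2) with hsdef
  set θ : ℝ := Real.arccos μ with hθdef
  set C : Matrix (Fin n) {i : Fin n // d i = μ} ℝ := Cemb (Subtype.val) with hCdef
  have hf : Function.Injective (Subtype.val : {i : Fin n // d i = μ} → Fin n) :=
    Subtype.val_injective
  have hCtC : Cᵀ * C = 1 := Cemb_tC _ hf
  have hCCt : C * Cᵀ = Pm d μ := by
    rw [hCdef, Cemb_Ct _ hf, Pm]
    refine congrArg Matrix.diagonal (funext fun i => ?_)
    by_cases h : d i = μ
    · rw [if_pos ⟨⟨i, h⟩, rfl⟩, if_pos h]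
    · rw [if_neg (fun hr => h (by obtain ⟨a, ha⟩ := hr; exact ha ▸ a.2)), if_neg h]
  have hPmC : Pm d μ * C = C := by
    ext i a
    rw [Pm, Matrix.diagonal_mul]
    by_cases h : (C : Matrix (Fin n) {i : Fin n // d i = μ} ℝ) i a = 0
    · rw [h, mul_zero]
    · have : (a : Fin n) = i := by
        by_contra hne
        exact h (by rw [hCdef, Cemb]; exact if_neg hne)
      rw [← this, a.2, if_pos rfl, one_mul]
  have hCtPm : Cᵀ * Pm d μ = Cᵀ := by
    have := congrArg Matrix.transpose hPmC
    rwa [Matrix.transpose_mul, Pm_t] at this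
  set M : Matrix {i : Fin n // d i = μ} {i : Fin n // d i = μ} ℝ := Cᵀ * K' * C with hMdef
  have hCMC : C * M * Cᵀ = Pm d μ * K' := by
    rw [hMdef]
    calc C * (Cᵀ * K' * C) * Cᵀ = (C * Cᵀ) * K' * (C * Cᵀ) := by simp only [Matrix.mul_assoc]
      _ = Pm d μ * K' * Pm d μ := by rw [hCCt]
      _ = Pm d μ * (Pm d μ * K') := by rw [Matrix.mul_assoc, ← hPK]
      _ = (Pm d μ * Pm d μ) * K' := by rw [Matrix.mul_assoc]
      _ = Pm d μ * K' := by rw [Pm_mul_self]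
  have hMM : M * M = (μ^2 - 1) • (1 : Matrix {i : Fin n // d i = μ} _ ℝ) := by
    rw [hMdef]
    calc (Cᵀ * K' * C) * (Cᵀ * K' * C)
        = Cᵀ * (K' * (C * Cᵀ) * K') * C := by simp only [Matrix.mul_assoc]
      _ = Cᵀ * (K' * Pm d μ * K') * C := by rw [hCCt]
      _ = Cᵀ * (Pm d μ * (K' * K')) * C := by rw [← hPK]; simp only [Matrix.mul_assoc]
      _ = Cᵀ * ((μ^2 - 1) • Pm d μ) * C := by rw [hKPK]
      _ = (μ^2 - 1) • (Cᵀ * Pm d μ * C) := by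
          rw [Matrix.mul_smul, Matrix.smul_mul]
      _ = (μ^2 - 1) • (1 : Matrix {i : Fin n // d i = μ} _ ℝ) := by rw [hCtPm, hCtC]
  set X : Matrix {i : Fin n // d i = μ} {i : Fin n // d i = μ} ℝ := s⁻¹ • M with hXdef
  have hXX : X * X = -1 := by
    rw [hXdef, Matrix.smul_mul, Matrix.mul_smul, smul_smul, hMM, smul_smul]
    have : s⁻¹ * s⁻¹ * (μ ^ 2 - 1) = -1 := by
      have h1 : s * s = 1 - μ^2 := by rw [← sq]; exact hs2
      field_simp
      nlinarith [h1]
    rw [this, neg_smul, one_smul]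
  have hkey : (θ * s⁻¹) • (Pm d μ * K') = C * (θ • X) * Cᵀ := by
    rw [hXdef, smul_smul, Matrix.mul_smul, Matrix.smul_mul, hCMC]
  rw [hkey, corner_exp _ _ hCtC, rot_exp X hXX θ]
  have hcos : Real.cos θ = μ := Real.cos_arccos (by nlinarith) (by nlinarith)
  have hsin : Real.sin θ = s := by rw [hθdef, Real.sin_arccos]
  rw [hcos, hsin]
  have hX' : s • X = M := by
    rw [hXdef, smul_smul, mul_inv_cancel₀ hsne, one_smul]
  congr 1
  calc C * (μ • 1 + s • X - 1) * Cᵀ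
      = C * ((μ - 1) • (1 : Matrix {i : Fin n // d i = μ} _ ℝ) + M) * Cᵀ := by
        rw [hX']
        congr 1
        rw [sub_smul, one_smul]
        abel
    _ = (μ - 1) • (C * Cᵀ) + C * M * Cᵀ := by
        rw [Matrix.mul_add, Matrix.add_mul, Matrix.mul_smul, Matrix.smul_mul, Matrix.mul_one]
    _ = (μ - 1) • Pm d μ + Pm d μ * K' := by rw [hCCt, hCMC]

/-- the −1 block: a skew matrix whose exponential is `1 - 2 • Pm d (-1)`. -/
lemma neg_block_exp {k : ℕ} (d : Fin n → ℝ)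
    (e : (Fin k ⊕ Fin k) ≃ {i : Fin n // d i = -1}) :
    ∃ J : Matrix (Fin n) (Fin n) ℝ, Jᵀ = -J ∧
      exp J = 1 - 2 • Pm d (-1) ∧
      Pm d (-1) * J = J ∧ J * Pm d (-1) = J := by
  set f : (Fin k ⊕ Fin k) → Fin n := fun a => ((e a : {i : Fin n // d i = -1}) : Fin n) with hfdef
  have hf : Function.Injective f := Subtype.val_injective.comp e.injective
  set C : Matrix (Fin n) (Fin k ⊕ Fin k) ℝ := Cemb f with hCdef
  have hCtC : Cᵀ * C = 1 := Cemb_tC _ hf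
  have hCCt : C * Cᵀ = Pm d (-1) := by
    rw [hCdef, Cemb_Ct _ hf, Pm]
    refine congrArg Matrix.diagonal (funext fun i => ?_)
    by_cases h : d i = -1
    · rw [if_pos ⟨e.symm ⟨i, h⟩, by simp [hfdef]⟩, if_pos h]
    · rw [if_neg (fun hr => h (by obtain ⟨a, ha⟩ := hr; exact ha ▸ (e a).2)), if_neg h]
  have hPmC : Pm d (-1) * C = C := by
    ext i a
    rw [Pm, Matrix.diagonal_mul]
    by_cases h : (C : Matrix (Fin n) (Fin k ⊕ Fin k) ℝ) i a = 0
    · rw [h, mul_zero]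
    · have : f a = i := by
        by_contra hne
        exact h (by rw [hCdef, Cemb]; exact if_neg hne)
      rw [← this, (e a).2, if_pos rfl, one_mul]
  have hCtPm : Cᵀ * Pm d (-1) = Cᵀ := by
    have := congrArg Matrix.transpose hPmC
    rwa [Matrix.transpose_mul, Pm_t] at this
  set J₀ : Matrix (Fin k ⊕ Fin k) (Fin k ⊕ Fin k) ℝ :=
    Matrix.fromBlocks 0 (-1) 1 0 with hJ₀def
  have hJ₀J₀ : J₀ * J₀ = -1 := by
    rw [hJ₀def, Matrix.fromBlocks_multiply]
    have h1 : (-1 : Matrix (Fin k ⊕ Fin k) (Fin k ⊕ Fin k) ℝ)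
        = Matrix.fromBlocks (-1) (-0) (-0) (-1) := by
      rw [← Matrix.fromBlocks_neg, Matrix.fromBlocks_one]
    rw [h1]
    congr 1 <;> simp
  have hJ₀t : J₀ᵀ = -J₀ := by
    rw [hJ₀def, Matrix.fromBlocks_transpose, Matrix.fromBlocks_neg]
    congr 1 <;> simp
  refine ⟨C * (Real.pi • J₀) * Cᵀ, ?_, ?_, ?_, ?_⟩
  · rw [Matrix.transpose_mul, Matrix.transpose_mul, Matrix.transpose_transpose,
      Matrix.transpose_smul, hJ₀t, smul_neg]
    rw [Matrix.neg_mul, Matrix.mul_neg, ← Matrix.mul_assoc]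
  · rw [corner_exp _ _ hCtC, rot_exp J₀ hJ₀J₀ Real.pi, Real.cos_pi, Real.sin_pi]
    have h1 : (-1 : ℝ) • (1 : Matrix (Fin k ⊕ Fin k) (Fin k ⊕ Fin k) ℝ) + (0:ℝ) • J₀ - 1
        = (-2 : ℝ) • 1 := by
      rw [zero_smul, add_zero, neg_smul, one_smul]
      rw [show ((-2:ℝ) • (1 : Matrix (Fin k ⊕ Fin k) (Fin k ⊕ Fin k) ℝ)) = -(1+1) by
        rw [neg_smul]; congr 1; rw [show (2:ℝ) = 1 + 1 by norm_num, add_smul, one_smul]]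
      abel
    rw [h1, Matrix.mul_smul, Matrix.mul_one, Matrix.smul_mul, hCCt]
    module
  · conv_lhs => rw [← Matrix.mul_assoc, ← Matrix.mul_assoc, hPmC]
  · rw [Matrix.mul_assoc, hCtPm]


end SOexp

open SOexp

/-- The matrix exponential from skew-symmetric matrices onto SO(n) is surjective. -/
theorem stmt_2 (n : ℕ) (B : Matrix (Fin n) (Fin n) ℝ)
    (hB : Bᵀ * B = 1) (hdet : B.det = 1) :
    ∃ A : Matrix (Fin n) (Fin n) ℝ, Aᵀ = -A ∧ exp A = B := by
  classical
  have hBBt : B * Bᵀ = 1 := mul_eq_one_comm.mp hB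
  set S : Matrix (Fin n) (Fin n) ℝ := (2⁻¹ : ℝ) • (B + Bᵀ) with hSdef
  set K : Matrix (Fin n) (Fin n) ℝ := (2⁻¹ : ℝ) • (B - Bᵀ) with hKdef
  have hSK : S + K = B := by rw [hSdef, hKdef]; module
  have hmul : ∀ X Y : Matrix (Fin n) (Fin n) ℝ,
      ((2⁻¹:ℝ) • X) * ((2⁻¹:ℝ) • Y) = (4⁻¹:ℝ) • (X * Y) := by
    intro X Y
    rw [Matrix.smul_mul, Matrix.mul_smul, smul_smul]
    norm_num
  have hexp1 : (B + Bᵀ) * (B + Bᵀ) = B*B + Bᵀ*Bᵀ + ((1:Matrix (Fin n) (Fin n) ℝ) + 1) := by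
    rw [Matrix.add_mul, Matrix.mul_add, Matrix.mul_add, hB, hBBt]
    abel
  have hexp2 : (B - Bᵀ) * (B - Bᵀ) = B*B + Bᵀ*Bᵀ - ((1:Matrix (Fin n) (Fin n) ℝ) + 1) := by
    rw [Matrix.sub_mul, Matrix.mul_sub, Matrix.mul_sub, hB, hBBt]
    abel
  have hexp3 : (B + Bᵀ) * (B - Bᵀ) = (B - Bᵀ) * (B + Bᵀ) := by
    rw [Matrix.add_mul, Matrix.mul_sub, Matrix.mul_sub, Matrix.sub_mul, Matrix.mul_add,
      Matrix.mul_add, hB, hBBt]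
    abel
  have hKK : K * K = S * S - 1 := by
    rw [hKdef, hSdef, hmul, hmul, hexp2, hexp1]
    module
  have hSKcomm : S * K = K * S := by
    rw [hKdef, hSdef, hmul, hmul, hexp3]
  have hSt : Sᵀ = S := by
    rw [hSdef, Matrix.transpose_smul, Matrix.transpose_add, Matrix.transpose_transpose]
    module
  have hKt : Kᵀ = -K := by
    rw [hKdef, Matrix.transpose_smul, Matrix.transpose_sub, Matrix.transpose_transpose]
    module
  have hS : S.IsHermitian := by
    show Sᴴ = S
    rw [conjTranspose_eq_transpose_of_trivial, hSt]
  set U : Matrix (Fin n) (Fin n) ℝ := (hS.eigenvectorUnitary : Matrix (Fin n) (Fin n) ℝ)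
    with hUdef
  have hUmem := hS.eigenvectorUnitary.2
  have hstar : star U = Uᵀ := by
    rw [Matrix.star_eq_conjTranspose, conjTranspose_eq_transpose_of_trivial]
  have hUtU : Uᵀ * U = 1 := by rw [← hstar]; exact (Unitary.mem_iff.mp hUmem).1
  have hUUt : U * Uᵀ = 1 := by rw [← hstar]; exact (Unitary.mem_iff.mp hUmem).2
  set d : Fin n → ℝ := hS.eigenvalues with hddef
  set D : Matrix (Fin n) (Fin n) ℝ := Matrix.diagonal d with hDdef
  have hspec : S = U * D * Uᵀ := by
    have h := hS.spectral_theorem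
    simp only [Unitary.conjStarAlgAut_apply, Unitary.coe_star, ← hUdef, hstar] at h
    rw [hDdef, hddef]
    convert h using 2
    all_goals rfl
  set K' : Matrix (Fin n) (Fin n) ℝ := Uᵀ * K * U with hK'def
  set B' : Matrix (Fin n) (Fin n) ℝ := Uᵀ * B * U with hB'def
  have hD : Uᵀ * S * U = D := by
    rw [hspec]
    calc Uᵀ * (U * D * Uᵀ) * U = (Uᵀ * U) * D * (Uᵀ * U) := by
          simp only [Matrix.mul_assoc]
      _ = D := by rw [hUtU]; simp
  have hB'DK : B' = D + K' := by
    rw [hB'def, ← hSK, Matrix.mul_add, Matrix.add_mul, hD, hK'def]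
  have hK't : K'ᵀ = -K' := by
    rw [hK'def, Matrix.transpose_mul, Matrix.transpose_mul, Matrix.transpose_transpose, hKt]
    rw [Matrix.neg_mul, Matrix.mul_neg, ← Matrix.mul_assoc]
  have hK'K' : K' * K' = D * D - 1 := by
    rw [hK'def]
    calc (Uᵀ * K * U) * (Uᵀ * K * U) = Uᵀ * (K * (U * Uᵀ) * K) * U := by
          simp only [Matrix.mul_assoc]
      _ = Uᵀ * (K * K) * U := by rw [hUUt]; simp [Matrix.mul_assoc]
      _ = Uᵀ * (S * S) * U - 1 := by
          rw [hKK, Matrix.mul_sub, Matrix.sub_mul, Matrix.mul_one, hUtU]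
      _ = (Uᵀ * S * U) * (Uᵀ * S * U) - 1 := by
          rw [show (Uᵀ * S * U) * (Uᵀ * S * U) = Uᵀ * (S * (U * Uᵀ) * S) * U by
            simp only [Matrix.mul_assoc], hUUt]
          simp [Matrix.mul_assoc]
      _ = D * D - 1 := by rw [hD]
  have hDK' : D * K' = K' * D := by
    rw [← hD, hK'def]
    calc (Uᵀ * S * U) * (Uᵀ * K * U) = Uᵀ * (S * (U * Uᵀ) * K) * U := by
          simp only [Matrix.mul_assoc]
      _ = Uᵀ * (K * (U * Uᵀ) * S) * U := by rw [hUUt]; simp [Matrix.mul_assoc, hSKcomm]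
      _ = (Uᵀ * K * U) * (Uᵀ * S * U) := by
          rw [show (Uᵀ * K * U) * (Uᵀ * S * U) = Uᵀ * (K * (U * Uᵀ) * S) * U by
            simp only [Matrix.mul_assoc]]
  -- entrywise facts
  have hcomm_e : ∀ i j, K' i j ≠ 0 → d i = d j := by
    intro i j hne
    have h : (D * K') i j = (K' * D) i j := by rw [hDK']
    rw [hDdef, Matrix.diagonal_mul, Matrix.mul_diagonal] at h
    rw [mul_comm (K' i j) (d j)] at h
    exact mul_right_cancel₀ hne h
  have hcol : ∀ j, ∑ i, (K' i j)^2 = 1 - (d j)^2 := by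
    intro j
    have h : K'ᵀ * K' = 1 - D * D := by
      rw [hK't, Matrix.neg_mul, hK'K']
      abel
    have h2 : (K'ᵀ * K') j j = (1 - D * D : Matrix (Fin n) (Fin n) ℝ) j j := by rw [h]
    rw [Matrix.mul_apply] at h2
    simp only [Matrix.transpose_apply] at h2
    have hr : (1 - D * D : Matrix (Fin n) (Fin n) ℝ) j j = 1 - (d j)^2 := by
      rw [Matrix.sub_apply, hDdef, Matrix.diagonal_mul_diagonal, Matrix.one_apply_eq,
        Matrix.diagonal_apply_eq, sq]
    rw [hr] at h2
    rw [← h2]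
    exact Finset.sum_congr rfl fun i _ => sq (K' i j)
  have hd2 : ∀ j, (d j)^2 ≤ 1 := by
    intro j
    nlinarith [hcol j, Finset.sum_nonneg (fun i (_ : i ∈ Finset.univ) => sq_nonneg (K' i j))]
  have hcolzero : ∀ j, (d j)^2 = 1 → ∀ i, K' i j = 0 := by
    intro j hj i
    have hsum : ∑ i, (K' i j)^2 = 0 := by rw [hcol j, hj]; ring
    have h := (Finset.sum_eq_zero_iff_of_nonneg
      (fun i _ => sq_nonneg (K' i j))).mp hsum i (Finset.mem_univ i)
    exact pow_eq_zero_iff (two_ne_zero) |>.mp h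
  have hrowzero : ∀ i, (d i)^2 = 1 → ∀ j, K' i j = 0 := by
    intro i hi j
    have h2 : K'ᵀ j i = (-K') j i := by rw [hK't]
    rw [Matrix.transpose_apply, Matrix.neg_apply] at h2
    rw [h2, hcolzero i hi j, neg_zero]
  set vals : Finset ℝ := Finset.image d Finset.univ with hvals
  -- commutation of Pm with K' and D
  have hPK : ∀ μ, Pm d μ * K' = K' * Pm d μ := by
    intro μ
    ext i j
    simp only [Pm]
    rw [Matrix.diagonal_mul, Matrix.mul_diagonal]
    by_cases h : K' i j = 0
    · rw [h, mul_zero, zero_mul]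
    · rw [hcomm_e i j h]
      ring
  have hPD : ∀ μ, Pm d μ * D = D * Pm d μ := by
    intro μ
    simp only [Pm, hDdef]
    rw [Matrix.diagonal_mul_diagonal, Matrix.diagonal_mul_diagonal]
    exact congrArg _ (funext fun i => mul_comm _ _)
  have hPmD : ∀ μ, Pm d μ * D = μ • Pm d μ := by
    intro μ
    rw [hPD, hDdef, diag_mul_Pm]
  have hKPK : ∀ μ, Pm d μ * (K' * K') = (μ^2 - 1) • Pm d μ := by
    intro μ
    rw [hK'K', Matrix.mul_sub, Matrix.mul_one]
    have h : Pm d μ * (D * D) = (μ^2) • Pm d μ := by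
      calc Pm d μ * (D * D) = (Pm d μ * D) * D := by rw [Matrix.mul_assoc]
        _ = (μ • Pm d μ) * D := by rw [hPmD]
        _ = μ • (Pm d μ * D) := by rw [Matrix.smul_mul]
        _ = μ • (μ • Pm d μ) := by rw [hPmD]
        _ = (μ^2) • Pm d μ := by rw [smul_smul, sq]
    rw [h, sub_smul, one_smul]
  have hPK1 : ∀ μ, μ^2 = 1 → Pm d μ * K' = 0 := by
    intro μ hμ
    ext i j
    simp only [Pm]
    rw [Matrix.diagonal_mul, Matrix.zero_apply]
    by_cases h : d i = μ
    · rw [if_pos h, one_mul, hrowzero i (by rw [h, hμ]) j]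
    · rw [if_neg h, zero_mul]
  have hPnegK : Pm d (-1) * K' = 0 := hPK1 (-1) (by norm_num)
  -- the per-eigenvalue data
  have hexpblocks : ∀ μ ∈ vals.erase (-1),
      exp ((Real.arccos μ * (Real.sqrt (1 - μ^2))⁻¹) • (Pm d μ * K'))
        = 1 + ((μ - 1) • Pm d μ + Pm d μ * K') := by
    intro μ hμmem
    have hμne : μ ≠ -1 := Finset.ne_of_mem_erase hμmem
    have hμmem' : μ ∈ vals := Finset.mem_of_mem_erase hμmem
    obtain ⟨i, -, hi⟩ := Finset.mem_image.mp hμmem'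
    have hμ2 : μ^2 ≤ 1 := hi ▸ hd2 i
    by_cases hμ1 : μ = 1
    · subst hμ1
      have h0 : Pm d 1 * K' = 0 := hPK1 1 (by norm_num)
      rw [h0, smul_zero, sub_self, zero_smul, zero_add, add_zero]
      rw [NormedSpace.exp_zero]
    · have hμlt : μ^2 < 1 := by
        rcases lt_or_eq_of_le hμ2 with h | h
        · exact h
        · exfalso
          have hz : (μ-1)*(μ+1) = 0 := by nlinarith
          rcases mul_eq_zero.mp hz with h' | h'
          · exact hμ1 (by linarith)
          · exact hμne (by linarith)
      exact block_exp d K' μ hμlt (hPK μ) (hKPK μ)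
  -- pairwise zero products
  have hPmKz : ∀ μ ν, μ ≠ ν → (Pm d μ * K') * (Pm d ν * K') = 0 := by
    intro μ ν hne
    calc (Pm d μ * K') * (Pm d ν * K')
        = Pm d μ * (K' * Pm d ν) * K' := by simp only [Matrix.mul_assoc]
      _ = Pm d μ * (Pm d ν * K') * K' := by rw [← hPK]
      _ = (Pm d μ * Pm d ν) * (K' * K') := by simp only [Matrix.mul_assoc]
      _ = 0 := by rw [Pm_mul_ne d hne, Matrix.zero_mul]
  have hPPK : ∀ μ ν, μ ≠ ν → Pm d μ * (Pm d ν * K') = 0 := by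
    intro μ ν hne
    rw [← Matrix.mul_assoc, Pm_mul_ne d hne, Matrix.zero_mul]
  have hPKP : ∀ μ ν, μ ≠ ν → (Pm d μ * K') * Pm d ν = 0 := by
    intro μ ν hne
    rw [Matrix.mul_assoc, ← hPK ν, ← Matrix.mul_assoc, Pm_mul_ne d hne, Matrix.zero_mul]
  have hAbz : ∀ μ ν, μ ≠ ν →
      ((Real.arccos μ * (Real.sqrt (1 - μ^2))⁻¹) • (Pm d μ * K'))
        * ((Real.arccos ν * (Real.sqrt (1 - ν^2))⁻¹) • (Pm d ν * K')) = 0 := by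
    intro μ ν hne
    rw [Matrix.smul_mul, Matrix.mul_smul, hPmKz μ ν hne, smul_zero, smul_zero]
  have hTz : ∀ μ ν, μ ≠ ν →
      ((μ - 1) • Pm d μ + Pm d μ * K') * ((ν - 1) • Pm d ν + Pm d ν * K') = 0 := by
    intro μ ν hne
    have t1 : ((μ-1) • Pm d μ) * ((ν-1) • Pm d ν) = 0 := by
      rw [Matrix.smul_mul, Matrix.mul_smul, Pm_mul_ne d hne, smul_zero, smul_zero]
    have t2 : ((μ-1) • Pm d μ) * (Pm d ν * K') = 0 := by
      rw [Matrix.smul_mul, hPPK μ ν hne, smul_zero]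
    have t3 : (Pm d μ * K') * ((ν-1) • Pm d ν) = 0 := by
      rw [Matrix.mul_smul, hPKP μ ν hne, smul_zero]
    rw [Matrix.add_mul, Matrix.mul_add, Matrix.mul_add, t1, t2, t3, hPmKz μ ν hne]
    simp
  -- sums of the T blocks
  have hTsum_all : ∑ μ ∈ vals, ((μ - 1) • Pm d μ + Pm d μ * K') = (D - 1) + K' := by
    rw [Finset.sum_add_distrib, ← Finset.sum_mul, Pm_sum d, Pm_sum_smul d, Matrix.one_mul,
      hDdef]
  have hTneg : ((-1 - 1 : ℝ) • Pm d (-1) + Pm d (-1) * K') = -((2:ℝ) • Pm d (-1)) := by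
    rw [hPnegK, add_zero]
    module
  have hTsum_erase : ∑ μ ∈ vals.erase (-1), ((μ - 1) • Pm d μ + Pm d μ * K')
      = (D - 1) + K' + (2:ℝ) • Pm d (-1) := by
    by_cases hm : (-1:ℝ) ∈ vals
    · have h := hTsum_all
      rw [← Finset.insert_erase hm, Finset.sum_insert (Finset.notMem_erase _ _), hTneg] at h
      calc ∑ μ ∈ vals.erase (-1), ((μ - 1) • Pm d μ + Pm d μ * K')
          = -(-((2:ℝ) • Pm d (-1)))
            + (-((2:ℝ) • Pm d (-1)) + ∑ μ ∈ vals.erase (-1), ((μ - 1) • Pm d μ + Pm d μ * K')) := by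
            abel
        _ = (D - 1) + K' + (2:ℝ) • Pm d (-1) := by rw [h]; abel
    · rw [Finset.erase_eq_of_notMem hm, hTsum_all, Pm_not_mem d hm, smul_zero, add_zero]
  -- the main part A0
  set A0 : Matrix (Fin n) (Fin n) ℝ :=
    ∑ μ ∈ vals.erase (-1), (Real.arccos μ * (Real.sqrt (1 - μ^2))⁻¹) • (Pm d μ * K') with hA0
  have hexpA0 : exp A0 = B' + (2:ℝ) • Pm d (-1) := by
    rw [hA0, exp_sum_one_add (vals.erase (-1))
        (fun μ => (Real.arccos μ * (Real.sqrt (1 - μ^2))⁻¹) • (Pm d μ * K'))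
        (fun μ => (μ - 1) • Pm d μ + Pm d μ * K')
        (fun i _ j _ hij => hAbz i j hij) (fun i _ j _ hij => hTz i j hij)
        (fun μ hμ => hexpblocks μ hμ), hTsum_erase, hB'DK]
    abel
  have hPmKskew : ∀ μ, (Pm d μ * K')ᵀ = -(Pm d μ * K') := by
    intro μ
    rw [Matrix.transpose_mul, Pm_t, hK't, Matrix.neg_mul, ← hPK]
  have hA0t : A0ᵀ = -A0 := by
    rw [hA0, Matrix.transpose_sum, ← Finset.sum_neg_distrib]
    refine Finset.sum_congr rfl fun μ _ => ?_
    rw [Matrix.transpose_smul, hPmKskew, smul_neg]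
  -- determinant and parity
  have hdetB' : B'.det = 1 := by
    rw [hB'def, Matrix.det_mul, Matrix.det_mul]
    have h : Uᵀ.det * U.det = 1 := by rw [← Matrix.det_mul, hUtU, Matrix.det_one]
    calc Uᵀ.det * B.det * U.det = (Uᵀ.det * U.det) * B.det := by ring
      _ = 1 := by rw [h, hdet, one_mul]
  have hEt : (exp A0)ᵀ * exp A0 = 1 := by
    rw [← Matrix.exp_transpose, hA0t,
      ← Matrix.exp_add_of_commute _ _ ((Commute.refl A0).neg_left), neg_add_cancel,
      NormedSpace.exp_zero]
  have hdetE1 : (exp A0).det * (exp A0).det = 1 := by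
    have h := congrArg Matrix.det hEt
    rwa [Matrix.det_mul, Matrix.det_transpose, Matrix.det_one] at h
  have hdetEpos : 0 ≤ (exp A0).det := by
    have hhalf : A0 = (2⁻¹ : ℝ) • A0 + (2⁻¹ : ℝ) • A0 := by module
    have h : exp A0 = exp ((2⁻¹ : ℝ) • A0) * exp ((2⁻¹ : ℝ) • A0) := by
      conv_lhs => rw [hhalf]
      rw [Matrix.exp_add_of_commute _ _ (Commute.refl _)]
    rw [h, Matrix.det_mul]
    exact mul_self_nonneg _
  have hdetE : (exp A0).det = 1 := by
    rcases mul_self_eq_one_iff.mp hdetE1 with h | h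
    · exact h
    · nlinarith [hdetEpos]
  have hBP : B' * Pm d (-1) = -Pm d (-1) := by
    rw [hB'DK, Matrix.add_mul]
    have h1 : D * Pm d (-1) = -Pm d (-1) := by
      rw [hDdef, diag_mul_Pm]
      module
    have h2 : K' * Pm d (-1) = 0 := by rw [← hPK, hPnegK]
    rw [h1, h2, add_zero]
  have h2n : ((2:ℕ) • Pm d (-1) : Matrix (Fin n) (Fin n) ℝ) = (2:ℝ) • Pm d (-1) := by
    module
  have hEfact : exp A0 = B' * (1 - 2 • Pm d (-1)) := by
    rw [hexpA0, h2n]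
    have e1 : B' * ((2:ℝ) • Pm d (-1)) = (2:ℝ) • (-Pm d (-1)) := by
      rw [Matrix.mul_smul, hBP]
    rw [Matrix.mul_sub, Matrix.mul_one, e1]
    module
  have hdetfact := congrArg Matrix.det hEfact
  rw [hdetE, Matrix.det_mul, hdetB', one_mul, det_one_sub_two_Pm] at hdetfact
  have heven : Even (Finset.univ.filter (fun i => d i = (-1:ℝ))).card := by
    rw [← neg_one_pow_eq_one_iff_even (R := ℝ) (by norm_num)]
    exact hdetfact.symm
  obtain ⟨k, hk⟩ := heven
  have hcards : Fintype.card (Fin k ⊕ Fin k) = Fintype.card {i : Fin n // d i = -1} := by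
    rw [Fintype.card_sum, Fintype.card_fin, Fintype.card_subtype, ← hk]
  obtain ⟨J, hJt, hJexp, hPJ, hJP⟩ := neg_block_exp d (Fintype.equivOfCardEq hcards)
  -- commuting of A0 with J
  have hA0J : A0 * J = 0 := by
    rw [hA0, Finset.sum_mul]
    refine Finset.sum_eq_zero fun μ hμ => ?_
    have hμne : μ ≠ -1 := Finset.ne_of_mem_erase hμ
    rw [Matrix.smul_mul, ← hPJ, ← Matrix.mul_assoc, hPKP μ (-1) hμne, Matrix.zero_mul,
      smul_zero]
  have hJA0 : J * A0 = 0 := by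
    rw [hA0, Finset.mul_sum]
    refine Finset.sum_eq_zero fun μ hμ => ?_
    have hμne : μ ≠ -1 := Finset.ne_of_mem_erase hμ
    rw [Matrix.mul_smul, ← hJP, Matrix.mul_assoc, hPPK (-1) μ (fun h => hμne h.symm),
      Matrix.mul_zero, smul_zero]
  refine ⟨U * (A0 + J) * Uᵀ, ?_, ?_⟩
  · have h : (U * (A0 + J) * Uᵀ)ᵀ = U * (A0 + J)ᵀ * Uᵀ := by
      rw [Matrix.transpose_mul, Matrix.transpose_mul, Matrix.transpose_transpose,
        Matrix.mul_assoc]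
    rw [h, Matrix.transpose_add, hA0t, hJt, show -A0 + -J = -(A0 + J) by abel,
      Matrix.mul_neg, Matrix.neg_mul]
  · have hcomm : Commute A0 J := by rw [Commute, SemiconjBy, hA0J, hJA0]
    have hexpAJ : exp (A0 + J) = B' := by
      rw [Matrix.exp_add_of_commute _ _ hcomm, hexpA0, hJexp, h2n]
      have e1 : (B' + (2:ℝ) • Pm d (-1)) * ((2:ℝ) • Pm d (-1))
          = (2:ℝ) • (-Pm d (-1)) + (2:ℝ) • ((2:ℝ) • Pm d (-1)) := by
        rw [Matrix.add_mul, Matrix.mul_smul, hBP, Matrix.smul_mul, Matrix.mul_smul,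
          Pm_mul_self]
      rw [Matrix.mul_sub, Matrix.mul_one, e1]
      module
    have hUunit : IsUnit U := ⟨⟨U, Uᵀ, hUUt, hUtU⟩, rfl⟩
    have hUinv : U⁻¹ = Uᵀ := Matrix.inv_eq_left_inv hUtU
    rw [← hUinv, Matrix.exp_conj U (A0 + J) hUunit, hUinv, hexpAJ, hB'def]
    calc U * (Uᵀ * B * U) * Uᵀ = (U * Uᵀ) * B * (U * Uᵀ) := by simp only [Matrix.mul_assoc]
      _ = B := by rw [hUUt, Matrix.one_mul, Matrix.mul_one]
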